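/- arXiv:2604.11421 — 4 statements merged into one kernel-verified Lean document; each statement's English description precedes it below -/
import Mathlib

section
/- Let X, Y ∈ ℝ^{m×m}, Z ∈ ℝ^{p×m}, and ε > 0, and set N = XᵀX + (Y − Yᵀ) + ZᵀZ + εI. Then I + N is invertible, and the matrix Cayley(N) = (I − N)(I + N)^{-1} satisfies Cayley(N)ᵀ · Cayley(N) ≺ I, i.e., I − Cayley(N)ᵀ Cayley(N) is positive definite. -/
open Matrix

/-- for `N = XᵀX + (Y − Yᵀ) + ZᵀZ + εI` with `ε > 0`, the matrix
`I + N` is invertible and the Cayley transform `(I − N)(I + N)⁻¹` satisfies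
`Cayley(N)ᵀ·Cayley(N) ≺ I`. -/
theorem cayley_contraction {m p : ℕ}
    (X Y : Matrix (Fin m) (Fin m) ℝ) (Z : Matrix (Fin p) (Fin m) ℝ)
    (ε : ℝ) (hε : 0 < ε)
    (N : Matrix (Fin m) (Fin m) ℝ)
    (hN : N = Xᵀ * X + (Y - Yᵀ) + Zᵀ * Z + ε • (1 : Matrix (Fin m) (Fin m) ℝ)) :
    IsUnit (1 + N) ∧
      (1 - ((1 - N) * (1 + N)⁻¹)ᵀ * ((1 - N) * (1 + N)⁻¹)).PosDef := by
  -- the symmetric part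
  set S : Matrix (Fin m) (Fin m) ℝ := Xᵀ * X + Zᵀ * Z + ε • 1 with hSdef
  have hXX : (Xᵀ * X).PosSemidef := by
    have := posSemidef_conjTranspose_mul_self X
    rwa [conjTranspose_eq_transpose_of_trivial] at this
  have hZZ : (Zᵀ * Z).PosSemidef := by
    have := posSemidef_conjTranspose_mul_self Z
    rwa [conjTranspose_eq_transpose_of_trivial] at this
  have hEps : (ε • (1 : Matrix (Fin m) (Fin m) ℝ)).PosDef := by
    have hd : ε • (1 : Matrix (Fin m) (Fin m) ℝ) = diagonal (fun _ => ε) := by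
      ext i j
      by_cases h : i = j <;> simp [one_apply, diagonal, h]
    rw [hd]
    exact (posDef_diagonal_iff).mpr fun _ => hε
  have hS : S.PosDef := Matrix.PosDef.posSemidef_add (hXX.add hZZ) hEps
  -- key quadratic form computation
  have hquad : ∀ v : Fin m → ℝ, v ⬝ᵥ (N *ᵥ v) = v ⬝ᵥ (S *ᵥ v) := by
    intro v
    have hskew : v ⬝ᵥ ((Y - Yᵀ) *ᵥ v) = 0 := by
      have h1 : v ⬝ᵥ (Yᵀ *ᵥ v) = v ⬝ᵥ (Y *ᵥ v) := by
        rw [dotProduct_mulVec v Yᵀ v, vecMul_transpose, dotProduct_comm]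
      rw [sub_mulVec, dotProduct_sub, h1, sub_self]
    have : N *ᵥ v = S *ᵥ v + (Y - Yᵀ) *ᵥ v := by
      rw [← add_mulVec, hN, hSdef]; congr 1; abel
    rw [this, dotProduct_add, hskew, add_zero]
  have hposquad : ∀ v : Fin m → ℝ, v ≠ 0 → 0 < v ⬝ᵥ ((1 + N) *ᵥ v) := by
    intro v hv
    rw [add_mulVec, dotProduct_add, one_mulVec, hquad]
    have h1 : 0 < v ⬝ᵥ v := by
      simpa using dotProduct_star_self_pos_iff.mpr hv
    exact add_pos h1 (by simpa using (posDef_iff_dotProduct_mulVec.mp hS).2 hv)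
  -- invertibility
  have hU : IsUnit (1 + N) := by
    rw [← Matrix.mulVec_injective_iff_isUnit]
    intro a b hab
    by_contra hne
    have hv : a - b ≠ 0 := sub_ne_zero.mpr hne
    have h0 : (1 + N) *ᵥ (a - b) = 0 := by
      rw [mulVec_sub, hab, sub_self]
    have := hposquad (a - b) hv
    rw [h0, dotProduct_zero] at this
    exact lt_irrefl 0 this
  refine ⟨hU, ?_⟩
  set A := 1 + N with hA
  have hAinv : A * A⁻¹ = 1 := mul_nonsing_inv _ ((isUnit_iff_isUnit_det _).mp hU)
  have h1 : (A⁻¹)ᵀ * Aᵀ = 1 := by rw [← transpose_mul, hAinv, transpose_one]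
  set P : Matrix (Fin m) (Fin m) ℝ := (N + Nᵀ) + (N + Nᵀ) with hPdef
  have hNt : N + Nᵀ = S + S := by
    rw [hN, hSdef]
    simp only [transpose_add, transpose_sub, transpose_mul, transpose_transpose,
      transpose_smul, transpose_one]
    abel
  have hP : P.PosDef := by
    rw [hPdef, hNt]
    exact (hS.add hS).add (hS.add hS)
  -- main algebraic identity
  have hD : Aᵀ * A - (1 - N)ᵀ * (1 - N) = P := by
    rw [hA, hPdef]
    simp only [transpose_add, transpose_sub, transpose_one]
    noncomm_ring
  have key : 1 - ((1 - N) * A⁻¹)ᵀ * ((1 - N) * A⁻¹) = (A⁻¹)ᵀ * P * A⁻¹ := by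
    have e1 : (A⁻¹)ᵀ * (Aᵀ * A) * A⁻¹ = (1 : Matrix (Fin m) (Fin m) ℝ) := by
      rw [← Matrix.mul_assoc _ Aᵀ A, h1, Matrix.one_mul, hAinv]
    rw [transpose_mul]
    calc 1 - (A⁻¹)ᵀ * (1 - N)ᵀ * ((1 - N) * A⁻¹)
        = (A⁻¹)ᵀ * (Aᵀ * A) * A⁻¹ - (A⁻¹)ᵀ * ((1 - N)ᵀ * (1 - N)) * A⁻¹ := by
          rw [e1]; noncomm_ring
      _ = (A⁻¹)ᵀ * (Aᵀ * A - (1 - N)ᵀ * (1 - N)) * A⁻¹ := by noncomm_ring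
      _ = (A⁻¹)ᵀ * P * A⁻¹ := by rw [hD]
  rw [key]
  refine posDef_iff_dotProduct_mulVec.mpr ⟨?_, ?_⟩
  · have := isHermitian_conjTranspose_mul_mul A⁻¹ hP.1
    rwa [conjTranspose_eq_transpose_of_trivial] at this
  · intro x hx
    have hx' : A⁻¹ *ᵥ x ≠ 0 := by
      intro h
      have : A *ᵥ (A⁻¹ *ᵥ x) = x := by
        rw [mulVec_mulVec, hAinv, one_mulVec]
      rw [h, mulVec_zero] at this
      exact hx this.symm
    have := (posDef_iff_dotProduct_mulVec.mp hP).2 hx'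
    have heq : star x ⬝ᵥ (((A⁻¹)ᵀ * P * A⁻¹) *ᵥ x)
        = star (A⁻¹ *ᵥ x) ⬝ᵥ (P *ᵥ (A⁻¹ *ᵥ x)) := by
      simp only [star_trivial, ← mulVec_mulVec]
      rw [dotProduct_mulVec x (A⁻¹)ᵀ, vecMul_transpose]
    rw [heq]
    exact this
end

section
/- (Generalized Cayley transform, sufficiency.) Let n ≥ m, let X, Y ∈ ℝ^{m×m}, Z ∈ ℝ^{(n−m)×m}, and ε > 0, and set N = XᵀX + (Y − Yᵀ) + ZᵀZ + εI. Then I + N is invertible, and the n × m matrix M formed by stacking Cayley(N) = (I − N)(I + N)^{-1} on top of −2Z(I + N)^{-1} satisfies Mᵀ M ≺ I, i.e., I − MᵀM is positive definite. -/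
open Matrix

/-- generalized Cayley transform, sufficiency: for
`N = XᵀX + (Y − Yᵀ) + ZᵀZ + εI` with `ε > 0`, the matrix `I + N` is invertible
and the stacked matrix `M = [Cayley(N); −2Z(I+N)⁻¹]` (rows indexed by
`Fin m ⊕ Fin p`, representing an `n × m` matrix with `n = m + p ≥ m`) satisfies
`MᵀM ≺ I`. -/
theorem generalized_cayley_sufficiency {m p : ℕ}
    (X Y : Matrix (Fin m) (Fin m) ℝ) (Z : Matrix (Fin p) (Fin m) ℝ)
    (ε : ℝ) (hε : 0 < ε)
    (N : Matrix (Fin m) (Fin m) ℝ)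
    (hN : N = Xᵀ * X + (Y - Yᵀ) + Zᵀ * Z + ε • (1 : Matrix (Fin m) (Fin m) ℝ))
    (M : Matrix (Fin m ⊕ Fin p) (Fin m) ℝ)
    (hM : M = Matrix.fromRows ((1 - N) * (1 + N)⁻¹) ((-2 : ℝ) • (Z * (1 + N)⁻¹))) :
    IsUnit (1 + N) ∧ (1 - Mᵀ * M).PosDef := by
  have dsn : ∀ {k : ℕ} (v : Fin k → ℝ), 0 ≤ v ⬝ᵥ v :=
    fun v => Finset.sum_nonneg fun i _ => mul_self_nonneg _
  have dsp : ∀ {k : ℕ} (v : Fin k → ℝ), v ≠ 0 → 0 < v ⬝ᵥ v := by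
    intro k v hv
    simpa using dotProduct_star_self_pos_iff.mpr hv
  -- quadratic form of N
  have hquad : ∀ x : Fin m → ℝ, x ⬝ᵥ (N *ᵥ x) =
      (X *ᵥ x) ⬝ᵥ (X *ᵥ x) + (Z *ᵥ x) ⬝ᵥ (Z *ᵥ x) + ε * (x ⬝ᵥ x) := by
    intro x
    have t1 : ∀ {q : ℕ} (W : Matrix (Fin q) (Fin m) ℝ),
        x ⬝ᵥ ((Wᵀ * W) *ᵥ x) = (W *ᵥ x) ⬝ᵥ (W *ᵥ x) := by
      intro q W
      rw [← mulVec_mulVec, dotProduct_mulVec, vecMul_transpose]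
    have t2 : x ⬝ᵥ (Yᵀ *ᵥ x) = x ⬝ᵥ (Y *ᵥ x) := by
      rw [dotProduct_mulVec, vecMul_transpose, dotProduct_comm]
    subst hN
    simp only [add_mulVec, sub_mulVec, dotProduct_add, dotProduct_sub,
      smul_mulVec, one_mulVec, dotProduct_smul, smul_eq_mul, t1, t2]
    ring
  have hpos : ∀ x : Fin m → ℝ, x ≠ 0 → 0 < x ⬝ᵥ ((1 + N) *ᵥ x) := by
    intro x hx
    rw [add_mulVec, one_mulVec, dotProduct_add, hquad]
    have := dsp x hx
    have h1 := dsn (X *ᵥ x)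
    have h2 := dsn (Z *ᵥ x)
    nlinarith
  have hU : IsUnit (1 + N) := by
    rw [← Matrix.mulVec_injective_iff_isUnit]
    intro a b hab
    by_contra hne
    have h0 : (1 + N) *ᵥ (a - b) = 0 := by
      rw [mulVec_sub, hab, sub_self]
    have := hpos (a - b) (sub_ne_zero.mpr fun h => hne h)
    rw [h0, dotProduct_zero] at this
    exact absurd this (lt_irrefl 0)
  refine ⟨hU, ?_⟩
  set A := 1 + N with hA
  have hdet : IsUnit A.det := (Matrix.isUnit_iff_isUnit_det A).mp hU
  have hAinv : A * A⁻¹ = 1 := Matrix.mul_nonsing_inv A hdet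
  have hinvA : A⁻¹ * A = 1 := Matrix.nonsing_inv_mul A hdet
  -- transpose of N
  have hNt : Nᵀ = Xᵀ * X - (Y - Yᵀ) + Zᵀ * Z + ε • (1 : Matrix (Fin m) (Fin m) ℝ) := by
    rw [hN]
    simp only [transpose_add, transpose_sub, transpose_mul, transpose_smul,
      transpose_one, transpose_transpose]
    abel
  -- key matrix identity
  set D : Matrix (Fin m) (Fin m) ℝ := (4:ℝ) • (Xᵀ * X + ε • 1) with hD
  have hMtM : Mᵀ * M = A⁻¹ᵀ * ((1 - N)ᵀ * (1 - N) + (4:ℝ) • (Zᵀ * Z)) * A⁻¹ := by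
    rw [hM, transpose_fromRows, fromCols_mul_fromRows]
    simp only [transpose_mul, transpose_smul, smul_mul_assoc, mul_smul_comm,
      smul_smul, mul_add, add_mul, mul_assoc]
    norm_num
    rw [smul_smul]
    norm_num
    simp only [Matrix.mul_assoc]
  have hE : Aᵀ * A - ((1 - N)ᵀ * (1 - N) + (4:ℝ) • (Zᵀ * Z)) = D := by
    rw [hA, hD]
    simp only [transpose_add, transpose_sub, transpose_one]
    have expand1 : (1 + Nᵀ) * (1 + N) = 1 + N + Nᵀ + Nᵀ * N := by noncomm_ring
    have expand2 : (1 - Nᵀ) * (1 - N) = 1 - N - Nᵀ + Nᵀ * N := by noncomm_ring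
    rw [expand1, expand2, hNt]
    rw [hN]
    module
  have hkey : (1 : Matrix (Fin m) (Fin m) ℝ) - Mᵀ * M = A⁻¹ᵀ * D * A⁻¹ := by
    have h1 : (1 : Matrix (Fin m) (Fin m) ℝ) = A⁻¹ᵀ * (Aᵀ * A) * A⁻¹ := by
      calc (1 : Matrix (Fin m) (Fin m) ℝ) = (A * A⁻¹)ᵀ * (A * A⁻¹) := by
            rw [hAinv]; simp
        _ = A⁻¹ᵀ * (Aᵀ * A) * A⁻¹ := by
            simp only [transpose_mul]; noncomm_ring
    rw [hMtM, ← hE]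
    rw [h1]
    noncomm_ring
  rw [hkey]
  -- D is positive definite, and conjugation preserves it
  rw [posDef_iff_dotProduct_mulVec]
  constructor
  · have : (A⁻¹ᵀ * D * A⁻¹)ᵀ = A⁻¹ᵀ * D * A⁻¹ := by
      simp only [transpose_mul, transpose_transpose, transpose_smul, hD,
        transpose_add, transpose_one, transpose_mul, transpose_transpose]
      noncomm_ring
    simpa [Matrix.IsHermitian, conjTranspose_eq_transpose_of_trivial] using this
  · intro x hx
    have hxA : A⁻¹ *ᵥ x ≠ 0 := by
      intro h
      have : A *ᵥ (A⁻¹ *ᵥ x) = 0 := by rw [h, mulVec_zero]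
      rw [mulVec_mulVec, hAinv, one_mulVec] at this
      exact hx this
    have : x ⬝ᵥ ((A⁻¹ᵀ * D * A⁻¹) *ᵥ x) = (A⁻¹ *ᵥ x) ⬝ᵥ (D *ᵥ (A⁻¹ *ᵥ x)) := by
      rw [← mulVec_mulVec, ← mulVec_mulVec, dotProduct_mulVec, vecMul_transpose]
    simp only [star_trivial]
    rw [this, hD]
    set y := A⁻¹ *ᵥ x
    rw [smul_mulVec, dotProduct_smul, add_mulVec, smul_mulVec, one_mulVec,
      dotProduct_add, dotProduct_smul, ← mulVec_mulVec, dotProduct_mulVec, vecMul_transpose]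
    have h1 := dsn (X *ᵥ y)
    have h2 := dsp y hxA
    have : (0:ℝ) < ε * (y ⬝ᵥ y) := mul_pos hε h2
    simp only [smul_eq_mul]
    nlinarith
end

section
/- (Generalized Cayley transform, necessity.) Let n ≥ m and let M be an n × m real matrix with MᵀM ≺ I, i.e., I − MᵀM positive definite. Then there exist matrices X, Y ∈ ℝ^{m×m}, Z ∈ ℝ^{(n−m)×m} and ε > 0 such that, with N = XᵀX + (Y − Yᵀ) + ZᵀZ + εI, the matrix I + N is invertible and M is the vertical stacking of Cayley(N) = (I − N)(I + N)^{-1} (first m rows) and −2Z(I + N)^{-1} (last n − m rows). -/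
open Matrix

private lemma dot_tmul {k l : ℕ} (P : Matrix (Fin k) (Fin l) ℝ) (x : Fin l → ℝ) :
    x ⬝ᵥ (Pᵀ * P) *ᵥ x = (P *ᵥ x) ⬝ᵥ (P *ᵥ x) := by
  rw [← mulVec_mulVec, dotProduct_mulVec, vecMul_transpose]

private lemma congr_quad {k : ℕ} (C G : Matrix (Fin k) (Fin k) ℝ) (x : Fin k → ℝ) :
    x ⬝ᵥ (Cᵀ * G * C) *ᵥ x = (C *ᵥ x) ⬝ᵥ G *ᵥ (C *ᵥ x) := by
  rw [← mulVec_mulVec, ← mulVec_mulVec, dotProduct_mulVec, vecMul_transpose]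

private lemma congr_posDef {k : ℕ} {G : Matrix (Fin k) (Fin k) ℝ} (hG : G.PosDef)
    {C : Matrix (Fin k) (Fin k) ℝ} (hC : IsUnit C) : (Cᵀ * G * C).PosDef := by
  rw [posDef_iff_dotProduct_mulVec]; constructor
  · have hGt : Gᵀ = G := by simpa using hG.1.eq
    show (Cᵀ * G * C)ᴴ = _
    simp [conjTranspose_eq_transpose_of_trivial, transpose_mul, hGt, mul_assoc]
  · intro x hx
    rw [star_trivial, congr_quad]
    refine lt_of_lt_of_eq (hG.dotProduct_mulVec_pos (x := C *ᵥ x) ?_) (by rw [star_trivial])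
    intro h
    exact hx (Matrix.mulVec_injective_iff_isUnit.2 hC (by simpa using h))

private lemma posSemidef_sub_smul {k : ℕ} {R : Matrix (Fin k) (Fin k) ℝ} (hR : R.PosDef)
    {ε : ℝ} (hε : ∀ i, ε ≤ hR.1.eigenvalues i) : (R - ε • 1).PosSemidef := by
  set U := (hR.1.eigenvectorUnitary : Matrix (Fin k) (Fin k) ℝ) with hUdef
  have hU : U * star U = 1 := Matrix.mem_unitaryGroup_iff.mp hR.1.eigenvectorUnitary.2
  have h1 : R - ε • 1 = U * (diagonal (fun i => hR.1.eigenvalues i - ε)) * Uᴴ := by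
    nth_rewrite 1 [hR.1.spectral_theorem, Unitary.conjStarAlgAut_apply]
    have h2 : (ε • (1 : Matrix (Fin k) (Fin k) ℝ)) = U * (ε • 1) * star U := by
      rw [Matrix.mul_smul, Matrix.mul_one, Matrix.smul_mul, hU]
    rw [h2, ← star_eq_conjTranspose, ← Matrix.sub_mul, ← Matrix.mul_sub,
      smul_one_eq_diagonal]
    congr 1
    rw [Matrix.diagonal_sub]
    congr 1
  rw [h1]
  exact (Matrix.PosSemidef.diagonal (fun i => sub_nonneg.2 (hε i))).mul_mul_conjTranspose_same U

/-- generalized Cayley transform, necessity: if an `n × m` real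
matrix `M` (rows indexed by `Fin m ⊕ Fin p`, so `n = m + p ≥ m`) satisfies
`MᵀM ≺ I`, then there exist `X, Y ∈ ℝ^{m×m}`, `Z ∈ ℝ^{p×m}` and `ε > 0` such
that, with `N = XᵀX + (Y − Yᵀ) + ZᵀZ + εI`, the matrix `I + N` is invertible
and `M` is the vertical stacking of `Cayley(N) = (I − N)(I + N)⁻¹` and
`−2Z(I + N)⁻¹`. -/
theorem generalized_cayley_necessity {m p : ℕ}
    (M : Matrix (Fin m ⊕ Fin p) (Fin m) ℝ)
    (hM : (1 - Mᵀ * M).PosDef) :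
    ∃ (X Y : Matrix (Fin m) (Fin m) ℝ) (Z : Matrix (Fin p) (Fin m) ℝ) (ε : ℝ)
      (N : Matrix (Fin m) (Fin m) ℝ),
      0 < ε ∧
      N = Xᵀ * X + (Y - Yᵀ) + Zᵀ * Z + ε • (1 : Matrix (Fin m) (Fin m) ℝ) ∧
      IsUnit (1 + N) ∧
      M = Matrix.fromRows ((1 - N) * (1 + N)⁻¹) ((-2 : ℝ) • (Z * (1 + N)⁻¹)) := by
  classical
  set A : Matrix (Fin m) (Fin m) ℝ := M.submatrix Sum.inl id with hAdef
  set B : Matrix (Fin p) (Fin m) ℝ := M.submatrix Sum.inr id with hBdef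
  have hMsplit : Mᵀ * M = Aᵀ * A + Bᵀ * B := by
    ext i j
    simp [mul_apply, Fintype.sum_sum_type, hAdef, hBdef]
  have hBB : (Bᵀ * B).PosSemidef := by
    have := Matrix.posSemidef_conjTranspose_mul_self B
    simpa [conjTranspose_eq_transpose_of_trivial] using this
  have hS : (1 - Aᵀ * A).PosDef := by
    have h : (1 : Matrix (Fin m) (Fin m) ℝ) - Aᵀ * A = (1 - Mᵀ * M) + Bᵀ * B := by
      rw [hMsplit]; abel
    rw [h]; exact hM.add_posSemidef hBB
  have hQpd : ((1 + A)ᵀ * (1 + A)).PosDef := by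
    rw [posDef_iff_dotProduct_mulVec]; constructor
    · show _ᴴ = _
      simp [conjTranspose_eq_transpose_of_trivial, transpose_mul]
    · intro x hx
      rw [star_trivial, dot_tmul]
      rcases eq_or_ne ((1 + A) *ᵥ x) 0 with h0 | h0
      · exfalso
        have hAx : A *ᵥ x = -x := by
          rw [add_mulVec, one_mulVec] at h0
          exact eq_neg_of_add_eq_zero_right h0
        have hpos := hS.dotProduct_mulVec_pos (x := x) (by simpa using hx)
        rw [star_trivial, sub_mulVec, one_mulVec, dotProduct_sub, dot_tmul, hAx] at hpos
        simp at hpos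
      · have h1 : 0 ≤ ((1 + A) *ᵥ x) ⬝ᵥ ((1 + A) *ᵥ x) := by
          simpa using dotProduct_self_star_nonneg ((1 + A) *ᵥ x)
        have h2 : ((1 + A) *ᵥ x) ⬝ᵥ ((1 + A) *ᵥ x) ≠ 0 := by
          rwa [ne_eq, dotProduct_self_eq_zero]
        exact h1.lt_of_ne' h2
  have hUnitA : IsUnit (1 + A) := by
    have hd := hQpd.det_pos
    rw [det_mul, det_transpose] at hd
    have hne : det (1 + A) ≠ 0 := by intro h; rw [h] at hd; simp at hd
    exact (Matrix.isUnit_iff_isUnit_det _).2 hne.isUnit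
  set C : Matrix (Fin m) (Fin m) ℝ := (1 + A)⁻¹ with hCdef
  have hC1 : (1 + A) * C = 1 := mul_nonsing_inv _ ((Matrix.isUnit_iff_isUnit_det _).1 hUnitA)
  have hC2 : C * (1 + A) = 1 := nonsing_inv_mul _ ((Matrix.isUnit_iff_isUnit_det _).1 hUnitA)
  have hCunit : IsUnit C := by
    apply (Matrix.isUnit_iff_isUnit_det _).2
    have := congrArg det hC2
    rw [det_mul, det_one] at this
    exact IsUnit.of_mul_eq_one _ this
  set N : Matrix (Fin m) (Fin m) ℝ := (1 - A) * C with hNdef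
  have h1pN : 1 + N = C + C := by
    have h : 1 + N = (1 + A) * C + (1 - A) * C := by rw [hC1, hNdef]
    rw [h]; noncomm_ring
  have hmulinv : (1 + N) * ((2⁻¹ : ℝ) • (1 + A)) = 1 := by
    rw [h1pN, Matrix.mul_smul, add_mul, hC2]
    module
  have hinv : (1 + N)⁻¹ = (2⁻¹ : ℝ) • (1 + A) := inv_eq_right_inv hmulinv
  have hUnitN : IsUnit (1 + N) := by
    apply (Matrix.isUnit_iff_isUnit_det _).2
    have := congrArg det hmulinv
    rw [det_mul, det_one] at this
    exact IsUnit.of_mul_eq_one _ this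
  have hCayley : (1 - N) * (1 + N)⁻¹ = A := by
    have h1mN : 1 - N = (A + A) * C := by
      have h : 1 - N = (1 + A) * C - (1 - A) * C := by rw [hC1, hNdef]
      rw [h]; noncomm_ring
    rw [hinv, h1mN, Matrix.mul_smul, mul_assoc, hC2, mul_one]
    module
  set Z : Matrix (Fin p) (Fin m) ℝ := -(B * C) with hZdef
  have hZeq : (-2 : ℝ) • (Z * (1 + N)⁻¹) = B := by
    rw [hZdef, hinv, Matrix.mul_smul, Matrix.neg_mul, Matrix.mul_assoc, hC2, Matrix.mul_one]
    module
  set R : Matrix (Fin m) (Fin m) ℝ := Cᵀ * (1 - Mᵀ * M) * C with hRdef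
  have hRpd : R.PosDef := congr_posDef hM hCunit
  have hCt : Cᵀ * (1 + A)ᵀ = 1 := by rw [← transpose_mul, hC1, transpose_one]
  have hNt : Nᵀ = Cᵀ * (1 - Aᵀ) := by
    rw [hNdef, transpose_mul, transpose_sub, transpose_one]
  have hCt' : Cᵀ * (1 + Aᵀ) = 1 := by
    have h : (1 + A)ᵀ = 1 + Aᵀ := by simp
    rw [← h]; exact hCt
  have e1 : N = Cᵀ * ((1 + Aᵀ) * (1 - A)) * C := by
    calc N = (Cᵀ * (1 + Aᵀ)) * ((1 - A) * C) := by rw [hCt', Matrix.one_mul, hNdef]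
    _ = Cᵀ * ((1 + Aᵀ) * (1 - A)) * C := by simp only [Matrix.mul_assoc]
  have e2 : Nᵀ = Cᵀ * ((1 - Aᵀ) * (1 + A)) * C := by
    calc Nᵀ = (Cᵀ * (1 - Aᵀ)) * ((1 + A) * C) := by rw [hC1, Matrix.mul_one, hNt]
    _ = Cᵀ * ((1 - Aᵀ) * (1 + A)) * C := by simp only [Matrix.mul_assoc]
  have hNsym : N + Nᵀ = Cᵀ * ((1 - Aᵀ * A) + (1 - Aᵀ * A)) * C := by
    rw [e2, e1, ← add_mul, ← mul_add]
    congr 2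
    noncomm_ring
  obtain ⟨ε, hε0, hεle⟩ : ∃ ε : ℝ, 0 < ε ∧ ∀ i, ε ≤ hRpd.1.eigenvalues i := by
    rcases Nat.eq_zero_or_pos m with hm | hm
    · exact ⟨1, one_pos, fun i => absurd i.2 (by omega)⟩
    · have hne : Nonempty (Fin m) := ⟨⟨0, hm⟩⟩
      refine ⟨Finset.univ.inf' Finset.univ_nonempty hRpd.1.eigenvalues, ?_, fun i =>
        Finset.inf'_le _ (Finset.mem_univ i)⟩
      rw [Finset.lt_inf'_iff]
      exact fun i _ => hRpd.eigenvalues_pos i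
  have hQps : (R - ε • 1).PosSemidef := posSemidef_sub_smul hRpd hεle
  obtain ⟨X, hX⟩ : ∃ X : Matrix (Fin m) (Fin m) ℝ, R - ε • 1 = Xᴴ * X := by
    open scoped MatrixOrder in
    simpa [star_eq_conjTranspose] using CStarAlgebra.nonneg_iff_eq_star_mul_self.mp hQps.nonneg
  have hX' : R - ε • 1 = Xᵀ * X := by
    rw [hX, conjTranspose_eq_transpose_of_trivial]
  have hZZ : Zᵀ * Z = Cᵀ * (Bᵀ * B) * C := by
    rw [hZdef]
    simp [transpose_mul, Matrix.mul_assoc]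
  have key : R = (2⁻¹ : ℝ) • (N + Nᵀ) - Zᵀ * Z := by
    have t1 : Cᵀ * ((1 - Aᵀ * A) + (1 - Aᵀ * A)) * C
        = Cᵀ * (1 - Aᵀ * A) * C + Cᵀ * (1 - Aᵀ * A) * C := by
      rw [mul_add, add_mul]
    have t2 : Cᵀ * (1 - (Aᵀ * A + Bᵀ * B)) * C
        = Cᵀ * (1 - Aᵀ * A) * C - Cᵀ * (Bᵀ * B) * C := by
      rw [show (1 : Matrix (Fin m) (Fin m) ℝ) - (Aᵀ * A + Bᵀ * B)
        = (1 - Aᵀ * A) - Bᵀ * B from by abel, mul_sub, sub_mul]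
    rw [hZZ, hNsym, hRdef, hMsplit, t1, t2]
    module
  refine ⟨X, (2⁻¹ : ℝ) • N, Z, ε, N, hε0, ?_, hUnitN, ?_⟩
  · rw [← hX', key, transpose_smul]
    module
  · rw [hCayley, hZeq]
    ext i j
    cases i <;> simp [hAdef, hBdef]
end

section
/- (Theorem 1, well-posedness with the Cayley parametrization.) Let L > 0 and let φ : ℝ^{n_z} → ℝ^{n_w} be L-Lipschitz with respect to the Euclidean norms. Assume n_w ≥ n_z, let X, Y ∈ ℝ^{n_z × n_z}, Z ∈ ℝ^{(n_w − n_z) × n_z}, ε > 0, and d ∈ ℝ; set N = XᵀX + (Y − Yᵀ) + ZᵀZ + εI, let D̄ be the n_w × n_z matrix obtained by stacking Cayley(N) = (I − N)(I + N)^{-1} on top of −2Z(I + N)^{-1}, and set D = (sigmoid(d)/L) · D̄ᵀ (an n_z × n_w matrix). Then for every n_z × n_x matrix C, every n_z × n_u matrix E, and every x ∈ ℝ^{n_x}, u ∈ ℝ^{n_u}, the equation z = D·φ(z) + C·x + E·u has a unique solution z⋆ ∈ ℝ^{n_z}. -/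
open Matrix

/-- The sigmoid function `sigmoid(x) = 1/(1 + e^{−x})`. -/
noncomputable def sigmoid (x : ℝ) : ℝ := 1 / (1 + Real.exp (-x))

lemma sigmoid_pos (x : ℝ) : 0 < sigmoid x := by
  unfold sigmoid
  have := Real.exp_pos (-x)
  positivity

lemma sigmoid_lt_one (x : ℝ) : sigmoid x < 1 := by
  unfold sigmoid
  have := Real.exp_pos (-x)
  rw [div_lt_one (by linarith)]
  linarith

private lemma dot_self_nonneg {n : Type*} [Fintype n] (v : n → ℝ) : 0 ≤ v ⬝ᵥ v :=
  Finset.sum_nonneg fun i _ => mul_self_nonneg (v i)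

private lemma dot_cs {n : Type*} [Fintype n] (v w : n → ℝ) :
    (v ⬝ᵥ w) ^ 2 ≤ (v ⬝ᵥ v) * (w ⬝ᵥ w) := by
  have h := Finset.sum_mul_sq_le_sq_mul_sq Finset.univ v w
  simpa [dotProduct, pow_two, mul_comm] using h

/-- If `‖A v‖ ≤ ‖v‖` for all `v` (in dot-product form), the same holds for `Aᵀ`. -/
private lemma transpose_contraction {m n : Type*} [Fintype m] [Fintype n]
    (A : Matrix m n ℝ) (hA : ∀ v : n → ℝ, (A *ᵥ v) ⬝ᵥ (A *ᵥ v) ≤ v ⬝ᵥ v)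
    (w : m → ℝ) : (Aᵀ *ᵥ w) ⬝ᵥ (Aᵀ *ᵥ w) ≤ w ⬝ᵥ w := by
  set a : n → ℝ := Aᵀ *ᵥ w with ha
  have h1 : a ⬝ᵥ a = w ⬝ᵥ (A *ᵥ a) := by
    rw [ha, mulVec_transpose, ← dotProduct_mulVec]
  have h2 : (w ⬝ᵥ (A *ᵥ a)) ^ 2 ≤ (w ⬝ᵥ w) * ((A *ᵥ a) ⬝ᵥ (A *ᵥ a)) := dot_cs _ _
  have h3 := hA a
  have h4 : (a ⬝ᵥ a) ^ 2 ≤ (w ⬝ᵥ w) * (a ⬝ᵥ a) := by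
    calc (a ⬝ᵥ a) ^ 2 = (w ⬝ᵥ (A *ᵥ a)) ^ 2 := by rw [h1]
      _ ≤ (w ⬝ᵥ w) * ((A *ᵥ a) ⬝ᵥ (A *ᵥ a)) := h2
      _ ≤ (w ⬝ᵥ w) * (a ⬝ᵥ a) := by
          exact mul_le_mul_of_nonneg_left h3 (dot_self_nonneg w)
  rcases (dot_self_nonneg a).lt_or_eq with hpos | hzero
  · nlinarith
  · rw [← hzero]; exact dot_self_nonneg w

/-- Theorem 1, well-posedness with the Cayley parametrization:
with `φ` an `L`-Lipschitz map into `ℝ^{n_w}` (here `n_w = n_z + p ≥ n_z`, rows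
indexed by `Fin n_z ⊕ Fin p`), `N = XᵀX + (Y − Yᵀ) + ZᵀZ + εI` with `ε > 0`,
`D̄ = [Cayley(N); −2Z(I+N)⁻¹]` and `D = (sigmoid(d)/L)·D̄ᵀ`, the algebraic loop
`z = D·φ(z) + C·x + E·u` has a unique solution for every `C`, `E`, `x`, `u`. -/
theorem lfr_wellposed_cayley {nz p nx nu : ℕ}
    (L : ℝ) (hL : 0 < L)
    (φ : EuclideanSpace ℝ (Fin nz) → EuclideanSpace ℝ (Fin nz ⊕ Fin p))
    (hφ : ∀ z₁ z₂, ‖φ z₁ - φ z₂‖ ≤ L * ‖z₁ - z₂‖)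
    (X Y : Matrix (Fin nz) (Fin nz) ℝ) (Z : Matrix (Fin p) (Fin nz) ℝ)
    (ε : ℝ) (hε : 0 < ε) (d : ℝ)
    (N : Matrix (Fin nz) (Fin nz) ℝ)
    (hN : N = Xᵀ * X + (Y - Yᵀ) + Zᵀ * Z + ε • (1 : Matrix (Fin nz) (Fin nz) ℝ))
    (Dbar : Matrix (Fin nz ⊕ Fin p) (Fin nz) ℝ)
    (hDbar : Dbar = Matrix.fromRows ((1 - N) * (1 + N)⁻¹) ((-2 : ℝ) • (Z * (1 + N)⁻¹)))
    (D : Matrix (Fin nz) (Fin nz ⊕ Fin p) ℝ)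
    (hD : D = (sigmoid d / L) • Dbarᵀ)
    (C : Matrix (Fin nz) (Fin nx) ℝ) (E : Matrix (Fin nz) (Fin nu) ℝ)
    (x : EuclideanSpace ℝ (Fin nx)) (u : EuclideanSpace ℝ (Fin nu)) :
    ∃! z : EuclideanSpace ℝ (Fin nz),
      z = Matrix.toEuclideanLin D (φ z) + Matrix.toEuclideanLin C x +
            Matrix.toEuclideanLin E u := by
  -- quadratic form of N
  have hquad : ∀ v : Fin nz → ℝ,
      v ⬝ᵥ (N *ᵥ v) = (X *ᵥ v) ⬝ᵥ (X *ᵥ v) + (Z *ᵥ v) ⬝ᵥ (Z *ᵥ v) + ε * (v ⬝ᵥ v) := by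
    intro v
    have hXX : v ⬝ᵥ ((Xᵀ * X) *ᵥ v) = (X *ᵥ v) ⬝ᵥ (X *ᵥ v) := by
      rw [← Matrix.mulVec_mulVec, Matrix.dotProduct_mulVec, Matrix.vecMul_transpose]
    have hZZ : v ⬝ᵥ ((Zᵀ * Z) *ᵥ v) = (Z *ᵥ v) ⬝ᵥ (Z *ᵥ v) := by
      rw [← Matrix.mulVec_mulVec, Matrix.dotProduct_mulVec, Matrix.vecMul_transpose]
    have hskew : v ⬝ᵥ ((Y - Yᵀ) *ᵥ v) = 0 := by
      rw [Matrix.sub_mulVec, dotProduct_sub, Matrix.mulVec_transpose,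
        dotProduct_comm v (v ᵥ* Y), ← Matrix.dotProduct_mulVec, sub_self]
    have heps : v ⬝ᵥ ((ε • (1 : Matrix (Fin nz) (Fin nz) ℝ)) *ᵥ v) = ε * (v ⬝ᵥ v) := by
      rw [Matrix.smul_mulVec, Matrix.one_mulVec, dotProduct_smul, smul_eq_mul]
    rw [hN, Matrix.add_mulVec, Matrix.add_mulVec, Matrix.add_mulVec,
      dotProduct_add, dotProduct_add, dotProduct_add, hXX, hZZ, hskew, heps]
    ring
  -- 1 + N is invertible
  have hker : ∀ v : Fin nz → ℝ, (1 + N) *ᵥ v = 0 → v = 0 := by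
    intro v hv
    have h0 : v ⬝ᵥ ((1 + N) *ᵥ v) = 0 := by rw [hv, dotProduct_zero]
    rw [Matrix.add_mulVec, Matrix.one_mulVec, dotProduct_add, hquad] at h0
    have := dot_self_nonneg v
    have := dot_self_nonneg (X *ᵥ v)
    have := dot_self_nonneg (Z *ᵥ v)
    have hvv : v ⬝ᵥ v = 0 := by nlinarith
    exact dotProduct_self_eq_zero.mp hvv
  have hunit : IsUnit (1 + N) := by
    rw [← Matrix.mulVec_injective_iff_isUnit]
    intro a b hab
    have : (1 + N) *ᵥ (a - b) = 0 := by
      rw [Matrix.mulVec_sub, hab, sub_self]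
    have := hker _ this
    exact sub_eq_zero.mp this
  have hinv : ∀ w : Fin nz → ℝ, (1 + N) *ᵥ ((1 + N)⁻¹ *ᵥ w) = w := by
    intro w
    rw [Matrix.mulVec_mulVec, Matrix.mul_nonsing_inv _ (Matrix.isUnit_iff_isUnit_det _ |>.mp hunit),
      Matrix.one_mulVec]
  -- Dbar is a (weak) contraction in dot-product form
  have hDbarC : ∀ w : Fin nz → ℝ, (Dbar *ᵥ w) ⬝ᵥ (Dbar *ᵥ w) ≤ w ⬝ᵥ w := by
    intro w
    set v : Fin nz → ℝ := (1 + N)⁻¹ *ᵥ w with hv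
    have hw : w = v + N *ᵥ v := by
      conv_lhs => rw [← hinv w]
      rw [Matrix.add_mulVec, Matrix.one_mulVec]
    have hDw : Dbar *ᵥ w = Sum.elim ((1 - N) *ᵥ v) ((-2 : ℝ) • (Z *ᵥ v)) := by
      rw [hDbar, Matrix.fromRows_mulVec, ← Matrix.mulVec_mulVec,
        Matrix.smul_mulVec, ← Matrix.mulVec_mulVec]
    rw [hDw, sumElim_dotProduct_sumElim]
    have h1 : (1 - N) *ᵥ v = v - N *ᵥ v := by
      rw [Matrix.sub_mulVec, Matrix.one_mulVec]
    have hsm : ((-2 : ℝ) • (Z *ᵥ v)) ⬝ᵥ ((-2 : ℝ) • (Z *ᵥ v)) = 4 * ((Z *ᵥ v) ⬝ᵥ (Z *ᵥ v)) := by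
      rw [smul_dotProduct, dotProduct_smul, smul_eq_mul, smul_eq_mul]; ring
    rw [h1, hsm, hw]
    have e1 : (v - N *ᵥ v) ⬝ᵥ (v - N *ᵥ v)
        = v ⬝ᵥ v - 2 * (v ⬝ᵥ (N *ᵥ v)) + (N *ᵥ v) ⬝ᵥ (N *ᵥ v) := by
      rw [dotProduct_sub, sub_dotProduct, sub_dotProduct,
        dotProduct_comm (N *ᵥ v) v]
      ring
    have e2 : (v + N *ᵥ v) ⬝ᵥ (v + N *ᵥ v)
        = v ⬝ᵥ v + 2 * (v ⬝ᵥ (N *ᵥ v)) + (N *ᵥ v) ⬝ᵥ (N *ᵥ v) := by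
      rw [dotProduct_add, add_dotProduct, add_dotProduct,
        dotProduct_comm (N *ᵥ v) v]
      ring
    rw [e1, e2, hquad]
    have := dot_self_nonneg v
    have := dot_self_nonneg (X *ᵥ v)
    nlinarith
  -- hence Dbarᵀ as well
  have hDbarT : ∀ w : (Fin nz ⊕ Fin p) → ℝ, (Dbarᵀ *ᵥ w) ⬝ᵥ (Dbarᵀ *ᵥ w) ≤ w ⬝ᵥ w :=
    transpose_contraction Dbar hDbarC
  -- translate to Euclidean norms
  have hsq : ∀ {n : Type} [Fintype n] (y : EuclideanSpace ℝ n),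
      ‖y‖ ^ 2 = (WithLp.equiv 2 (n → ℝ) y) ⬝ᵥ (WithLp.equiv 2 (n → ℝ) y) := by
    intro n _ y
    rw [← real_inner_self_eq_norm_sq]
    simp only [PiLp.inner_apply, RCLike.inner_apply, starRingEnd_apply, star_trivial]
    rfl
  have hDbarTnorm : ∀ w : EuclideanSpace ℝ (Fin nz ⊕ Fin p),
      ‖Matrix.toEuclideanLin Dbarᵀ w‖ ≤ ‖w‖ := by
    intro w
    have h1 : ‖Matrix.toEuclideanLin Dbarᵀ w‖ ^ 2 ≤ ‖w‖ ^ 2 := by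
      rw [hsq, hsq]
      exact hDbarT _
    have := norm_nonneg (Matrix.toEuclideanLin Dbarᵀ w)
    have := norm_nonneg w
    nlinarith
  have hsig0 := sigmoid_pos d
  have hsig1 := sigmoid_lt_one d
  have hDnorm : ∀ w : EuclideanSpace ℝ (Fin nz ⊕ Fin p),
      ‖Matrix.toEuclideanLin D w‖ ≤ sigmoid d / L * ‖w‖ := by
    intro w
    rw [hD, _root_.map_smul, LinearMap.smul_apply, norm_smul, Real.norm_eq_abs,
      abs_of_nonneg (by positivity)]
    exact mul_le_mul_of_nonneg_left (hDbarTnorm w) (by positivity)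
  -- the fixed point map
  set f : EuclideanSpace ℝ (Fin nz) → EuclideanSpace ℝ (Fin nz) :=
    fun z => Matrix.toEuclideanLin D (φ z) + Matrix.toEuclideanLin C x +
      Matrix.toEuclideanLin E u with hf
  set K : NNReal := ⟨sigmoid d, le_of_lt hsig0⟩ with hK
  have hlip : LipschitzWith K f := by
    apply LipschitzWith.of_dist_le_mul
    intro a b
    rw [dist_eq_norm, dist_eq_norm]
    have hfab : f a - f b = Matrix.toEuclideanLin D (φ a - φ b) := by
      simp only [hf, map_sub]
      abel
    rw [hfab]
    calc ‖Matrix.toEuclideanLin D (φ a - φ b)‖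
        ≤ sigmoid d / L * ‖φ a - φ b‖ := hDnorm _
      _ ≤ sigmoid d / L * (L * ‖a - b‖) := by
          exact mul_le_mul_of_nonneg_left (hφ a b) (by positivity)
      _ = K * ‖a - b‖ := by
          rw [hK]
          show _ = sigmoid d * ‖a - b‖
          field_simp
  have hcon : ContractingWith K f := by
    constructor
    · rw [← NNReal.coe_lt_coe]
      exact_mod_cast hsig1
    · exact hlip
  refine ⟨hcon.fixedPoint f, ?_, ?_⟩
  · exact (hcon.fixedPoint_isFixedPt).symm
  · intro y hy
    exact hcon.fixedPoint_unique hy.symm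
end
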